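/- arXiv:0707.0644 — 5 statements merged into one kernel-verified Lean document; each statement's English description precedes it below -/
import Mathlib

section
/- Let b₁, b₂ be linearly independent vectors in ℝ², let m = ⟨b₂,b₁⟩/⟨b₁,b₁⟩ and assume the basis is proper, i.e. −1/2 ≤ m < 1/2. Let x be an integer with |x| ≥ 2, and define b̃₁ = b₂ + x·b₁ and b̃₂ = b₁. Then |b̃₂| < |b̃₁|. -/
theorem stmt_7 (b₁ b₂ : EuclideanSpace ℝ (Fin 2))
    (hind : LinearIndependent ℝ ![b₁, b₂])
    (m : ℝ) (hm : m = (inner ℝ b₂ b₁ : ℝ) / (inner ℝ b₁ b₁ : ℝ))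
    (hproper : -(1 / 2) ≤ m ∧ m < 1 / 2)
    (x : ℤ) (hx : 2 ≤ |x|) :
    ‖b₁‖ < ‖b₂ + (x : ℝ) • b₁‖ := by
  have hb1 : b₁ ≠ 0 := by simpa using hind.ne_zero 0
  have h0 : (0:ℝ) < ‖b₁‖ := norm_pos_iff.mpr hb1
  have hip : (inner ℝ b₁ b₁ : ℝ) = ‖b₁‖ ^ 2 := by
    rw [real_inner_self_eq_norm_sq]
  have hip0 : (inner ℝ b₁ b₁ : ℝ) ≠ 0 := by rw [hip]; positivity
  have hinner : (inner ℝ b₂ b₁ : ℝ) = m * ‖b₁‖ ^ 2 := by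
    rw [hm, div_mul_eq_mul_div, ← hip, mul_div_assoc, div_self hip0, mul_one]
  have hexp : ‖b₂ + (x : ℝ) • b₁‖ ^ 2
      = ‖b₂‖ ^ 2 + 2 * ((x:ℝ) * (m * ‖b₁‖ ^ 2)) + (x:ℝ)^2 * ‖b₁‖ ^ 2 := by
    rw [norm_add_sq_real, real_inner_smul_right, hinner, norm_smul]
    simp [mul_pow]
  have hxr : (2:ℝ) ≤ |(x:ℝ)| := by exact_mod_cast (by simpa using hx : (2:ℤ) ≤ |x|)
  have hsq : ‖b₁‖ ^ 2 < ‖b₂ + (x : ℝ) • b₁‖ ^ 2 := by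
    rw [hexp]
    have hb2 : (0:ℝ) ≤ ‖b₂‖ ^ 2 := by positivity
    rcases le_or_gt 0 (x:ℝ) with hxs | hxs
    · have h2 : (2:ℝ) ≤ (x:ℝ) := by rwa [abs_of_nonneg hxs] at hxr
      have hB : (0:ℝ) < ‖b₁‖ ^ 2 := by positivity
      have h1 : (0:ℝ) ≤ ((x:ℝ) * ‖b₁‖ ^ 2) * ((x:ℝ) + 2 * m - 1) := by
        apply mul_nonneg (mul_nonneg (by linarith) hB.le); linarith [hproper.1]
      have h2 : (0:ℝ) ≤ ((x:ℝ) - 2) * ‖b₁‖ ^ 2 := mul_nonneg (by linarith) hB.le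
      nlinarith [h1, h2, hB]
    · have h2 : (x:ℝ) ≤ -2 := by
        have := hxr; rw [abs_of_neg hxs] at this; linarith
      have hB : (0:ℝ) < ‖b₁‖ ^ 2 := by positivity
      have h1 : (0:ℝ) ≤ ((-(x:ℝ)) * ‖b₁‖ ^ 2) * (-((x:ℝ) + 2 * m) - 1) := by
        apply mul_nonneg (mul_nonneg (by linarith) hB.le); linarith [hproper.2]
      have h3 : (0:ℝ) ≤ (-(x:ℝ) - 2) * ‖b₁‖ ^ 2 := mul_nonneg (by linarith) hB.le
      nlinarith [h1, h3, hB]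
  have := lt_of_pow_lt_pow_left₀ 2 (norm_nonneg _) hsq
  exact this
end

section
/- Let (b₁,b₂) be a proper basis of ℝ² (i.e. m = ⟨b₂,b₁⟩/⟨b₁,b₁⟩ satisfies −1/2 ≤ m < 1/2), and let x be an integer with |x| ≥ 3. Setting b̃₁ = b₂ + x·b₁, b̃₂ = b₁, and m̃ = ⟨b̃₂,b̃₁⟩/⟨b̃₁,b̃₁⟩, we have |m̃| ≤ 1/2, i.e. the new basis satisfies |⟨b̃₁,b̃₁⟩ / ⟨b̃₁,b̃₂⟩| ≥ 2. -/
theorem stmt_8 (b₁ b₂ : EuclideanSpace ℝ (Fin 2))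
    (hind : LinearIndependent ℝ ![b₁, b₂])
    (m : ℝ) (hm : m = (inner ℝ b₂ b₁ : ℝ) / (inner ℝ b₁ b₁ : ℝ))
    (hproper : -(1 / 2) ≤ m ∧ m < 1 / 2)
    (x : ℤ) (hx : 3 ≤ |x|) :
    |(inner ℝ b₁ (b₂ + (x : ℝ) • b₁) : ℝ) /
      (inner ℝ (b₂ + (x : ℝ) • b₁) (b₂ + (x : ℝ) • b₁) : ℝ)| ≤ 1 / 2 := by
  have hb₁ : b₁ ≠ 0 := by
    have := hind.ne_zero 0
    simpa using this
  set A : ℝ := inner ℝ b₁ b₁ with hA'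
  set B : ℝ := inner ℝ b₂ b₂ with hB'
  set C : ℝ := inner ℝ b₂ b₁ with hC'
  have hA : 0 < A := by
    rw [hA', real_inner_self_eq_norm_sq]
    have : 0 < ‖b₁‖ := norm_pos_iff.mpr hb₁
    positivity
  have hCS : C * C ≤ B * A := real_inner_mul_inner_self_le b₂ b₁
  have hC : C = m * A := by
    rw [hm]; field_simp
  have hxr : (3:ℝ) ≤ |(x:ℝ)| := by
    rw [← Int.cast_abs]; exact_mod_cast hx
  set xr : ℝ := (x:ℝ)
  have hnum : (inner ℝ b₁ (b₂ + xr • b₁) : ℝ) = C + xr * A := by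
    simp [inner_add_right, real_inner_smul_right, real_inner_comm b₁ b₂, hA', hC']
  have hden : (inner ℝ (b₂ + xr • b₁) (b₂ + xr • b₁) : ℝ)
      = B + 2 * xr * C + xr ^ 2 * A := by
    simp only [inner_add_left, inner_add_right, real_inner_smul_left, real_inner_smul_right,
      real_inner_comm b₁ b₂, hA', hB', hC']
    ring
  rw [hnum, hden]
  have hm2 : |m| ≤ 1 / 2 := by
    rw [abs_le]; constructor <;> [linarith [hproper.1]; linarith [hproper.2]]
  have hxm : (5/2 : ℝ) ≤ |xr + m| := by
    rcases abs_le.mp hm2 with ⟨h1, h2⟩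
    rcases abs_le'.mp (le_refl |xr|) with _
    rcases le_or_gt 0 xr with hx0 | hx0
    · have : (3:ℝ) ≤ xr := by rwa [abs_of_nonneg hx0] at hxr
      rw [abs_of_pos (by linarith)]; linarith
    · have : xr ≤ -3 := by
        have := abs_of_neg hx0; linarith [hxr, this]
      rw [abs_of_neg (by linarith)]; linarith
  have hkey : A * (xr + m) ^ 2 ≤ B + 2 * xr * C + xr ^ 2 * A := by
    have hmB : m ^ 2 * A ≤ B := by
      have h : (m * A) * (m * A) ≤ B * A := by rw [← hC]; exact hCS
      nlinarith
    have hexp : A * (xr + m) ^ 2 = xr ^ 2 * A + 2 * xr * C + m ^ 2 * A := by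
      rw [hC]; ring
    linarith
  have hD : 0 < B + 2 * xr * C + xr ^ 2 * A := by
    have hne : xr + m ≠ 0 := by
      intro h; rw [h] at hxm; simp at hxm; linarith
    have h2 : (0:ℝ) < A * (xr + m) ^ 2 := by positivity
    linarith
  rw [abs_div, abs_of_pos hD, div_le_iff₀ hD]
  have hnumabs : |C + xr * A| = A * |xr + m| := by
    rw [hC, show m * A + xr * A = A * (xr + m) by ring, abs_mul, abs_of_pos hA]
  rw [hnumabs]
  have h0 : |xr + m| ≤ (1/2) * (xr + m) ^ 2 := by
    nlinarith [sq_abs (xr + m)]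
  have h1 := mul_le_mul_of_nonneg_left h0 hA.le
  linarith
end

section
/- Let (b₁,b₂) be a proper basis of ℝ² and let x be an integer with |x| ≥ 3. Define ℓ(c₁,c₂) = |c₁|² + |c₂|². Then ℓ(b₂ + x·b₁, b₁) ≥ ℓ(b₂ + 2·b₁, b₁) and ℓ(b₂ + x·b₁, b₁) ≥ ℓ(b₂ − 2·b₁, b₁). -/
theorem stmt_10 (b₁ b₂ : EuclideanSpace ℝ (Fin 2))
    (hind : LinearIndependent ℝ ![b₁, b₂])
    (m : ℝ) (hm : m = (inner ℝ b₂ b₁ : ℝ) / (inner ℝ b₁ b₁ : ℝ))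
    (hproper : -(1 / 2) ≤ m ∧ m < 1 / 2)
    (x : ℤ) (hx : 3 ≤ |x|) :
    ‖b₂ + (2 : ℝ) • b₁‖ ^ 2 + ‖b₁‖ ^ 2 ≤ ‖b₂ + (x : ℝ) • b₁‖ ^ 2 + ‖b₁‖ ^ 2 ∧
    ‖b₂ - (2 : ℝ) • b₁‖ ^ 2 + ‖b₁‖ ^ 2 ≤ ‖b₂ + (x : ℝ) • b₁‖ ^ 2 + ‖b₁‖ ^ 2 := by
  have hb1 : b₁ ≠ 0 := by
    have := hind.ne_zero 0
    simpa using this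
  have hB : (0:ℝ) < ‖b₁‖ ^ 2 := by
    have : 0 < ‖b₁‖ := norm_pos_iff.mpr hb1
    positivity
  have hself : (inner ℝ b₁ b₁ : ℝ) = ‖b₁‖ ^ 2 := real_inner_self_eq_norm_sq b₁
  have hI : (inner ℝ b₂ b₁ : ℝ) = m * ‖b₁‖ ^ 2 := by
    rw [hm, hself]; field_simp
  have hexp : ∀ c : ℝ, ‖b₂ + c • b₁‖ ^ 2
      = ‖b₂‖ ^ 2 + 2 * c * (m * ‖b₁‖ ^ 2) + c ^ 2 * ‖b₁‖ ^ 2 := by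
    intro c
    rw [norm_add_sq_real, real_inner_smul_right, norm_smul, mul_pow, hI]
    simp [sq_abs]
    ring
  have hsub : b₂ - (2:ℝ) • b₁ = b₂ + (-2:ℝ) • b₁ := by
    rw [neg_smul, ← sub_eq_add_neg]
  have hc : (3:ℝ) ≤ (x:ℝ) ∨ (x:ℝ) ≤ -3 := by
    rcases le_abs.mp hx with h | h
    · left; exact_mod_cast h
    · right
      have : x ≤ -3 := by linarith
      exact_mod_cast this
  rw [hexp, hexp, hsub, hexp]
  obtain ⟨hm1, hm2⟩ := hproper
  constructor
  · rcases hc with h | h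
    · nlinarith [mul_nonneg (mul_nonneg (by linarith : (0:ℝ) ≤ (x:ℝ) - 2)
        (by linarith : (0:ℝ) ≤ (x:ℝ) + 2 + 2 * m)) hB.le]
    · nlinarith [mul_nonneg (mul_nonneg (by linarith : (0:ℝ) ≤ 2 - (x:ℝ))
        (by linarith : (0:ℝ) ≤ -((x:ℝ) + 2 + 2 * m))) hB.le]
  · rcases hc with h | h
    · nlinarith [mul_nonneg (mul_nonneg (by linarith : (0:ℝ) ≤ (x:ℝ) + 2)
        (by linarith : (0:ℝ) ≤ (x:ℝ) - 2 + 2 * m)) hB.le]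
    · nlinarith [mul_nonneg (mul_nonneg (by linarith : (0:ℝ) ≤ -((x:ℝ) + 2))
        (by linarith : (0:ℝ) ≤ -((x:ℝ) - 2 + 2 * m))) hB.le]
end

section
/- Let (b₁,b₂) be a reduced (Gauss-reduced, proper with |b₁| ≤ |b₂|) basis of ℝ², let k ≥ 1, and let x, x′ be integers with x ≥ x′ ≥ 0. Write M_y for the basis obtained by applying the matrix (S·T²)^k·S·T^y to the basis matrix with rows b₁, b₂. Then ℓ(M_x) ≥ ℓ(M_{x′}), where ℓ is the sum of squared norms of the two rows. -/
open Matrix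

def Smat : Matrix (Fin 2) (Fin 2) ℤ := !![0, 1; 1, 0]

def Tpow (x : ℤ) : Matrix (Fin 2) (Fin 2) ℤ := !![1, 0; x, 1]

/-- The rows of the basis obtained by applying an integer matrix `U` to the basis
matrix with rows `b₁`, `b₂`. -/
noncomputable def rowAct (U : Matrix (Fin 2) (Fin 2) ℤ) (b₁ b₂ : EuclideanSpace ℝ (Fin 2)) :
    Fin 2 → EuclideanSpace ℝ (Fin 2) :=
  fun i => (U i 0 : ℝ) • b₁ + (U i 1 : ℝ) • b₂

/-- The length `ℓ` (sum of squared norms of the rows) of `U` applied to the basis. -/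
noncomputable def lenAct (U : Matrix (Fin 2) (Fin 2) ℤ) (b₁ b₂ : EuclideanSpace ℝ (Fin 2)) : ℝ :=
  ‖rowAct U b₁ b₂ 0‖ ^ 2 + ‖rowAct U b₁ b₂ 1‖ ^ 2

lemma ST2_nonneg (k : ℕ) : ∀ i j, (0:ℤ) ≤ ((Smat * Tpow 2)^k) i j := by
  induction k with
  | zero => intro i j; fin_cases i <;> fin_cases j <;> simp [Matrix.one_apply]
  | succ n ih =>
    intro i j
    rw [pow_succ, Matrix.mul_apply, Fin.sum_univ_two]
    have h0 := ih i 0; have h1 := ih i 1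
    have e0 : (Smat * Tpow 2) 0 j ≥ 0 := by
      fin_cases j <;> simp [Smat, Tpow, Matrix.mul_apply, Fin.sum_univ_two]
    have e1 : (Smat * Tpow 2) 1 j ≥ 0 := by
      fin_cases j <;> simp [Smat, Tpow, Matrix.mul_apply, Fin.sum_univ_two]
    positivity

lemma U_entries (A : Matrix (Fin 2) (Fin 2) ℤ) (y : ℤ) (i : Fin 2) :
    (A * Smat * Tpow y) i 0 = A i 0 * y + A i 1 ∧ (A * Smat * Tpow y) i 1 = A i 0 := by
  constructor <;>
    simp [Smat, Tpow, Matrix.mul_apply, Fin.sum_univ_two] <;> ring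

lemma norm_combo (p q : ℝ) (b₁ b₂ : EuclideanSpace ℝ (Fin 2)) :
    ‖p • b₁ + q • b₂‖^2 = p^2*‖b₁‖^2 + 2*p*q*(inner ℝ b₁ b₂ : ℝ) + q^2*‖b₂‖^2 := by
  rw [norm_add_sq_real, real_inner_smul_left, real_inner_smul_right]
  simp [norm_smul, mul_pow, sq_abs]
  ring

theorem stmt_17 (b₁ b₂ : EuclideanSpace ℝ (Fin 2))
    (hind : LinearIndependent ℝ ![b₁, b₂])
    (m : ℝ) (hm : m = (inner ℝ b₂ b₁ : ℝ) / (inner ℝ b₁ b₁ : ℝ))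
    (hproper : -(1 / 2) ≤ m ∧ m < 1 / 2)
    (hred : ‖b₁‖ ≤ ‖b₂‖)
    (k : ℕ) (hk : 1 ≤ k) (x x' : ℤ) (hx' : 0 ≤ x') (hxx : x' ≤ x) :
    lenAct ((Smat * Tpow 2) ^ k * Smat * Tpow x') b₁ b₂ ≤
      lenAct ((Smat * Tpow 2) ^ k * Smat * Tpow x) b₁ b₂ := by
  set A := (Smat * Tpow 2)^k with hA
  have hb1 : b₁ ≠ 0 := by
    have := hind.ne_zero 0; simpa using this
  have hB : (0:ℝ) < ‖b₁‖^2 := by have h := norm_pos_iff.mpr hb1; positivity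
  have hinner : (inner ℝ b₁ b₂ : ℝ) = m * ‖b₁‖^2 := by
    rw [hm, real_inner_comm b₁ b₂, real_inner_self_eq_norm_sq]
    field_simp
  have key : ∀ y : ℤ, lenAct (A * Smat * Tpow y) b₁ b₂ =
      ((A 0 0 : ℝ)*y + (A 0 1 : ℝ))^2*‖b₁‖^2
        + 2*((A 0 0 : ℝ)*y + (A 0 1 : ℝ))*(A 0 0 : ℝ)*(m*‖b₁‖^2)
        + (A 0 0 : ℝ)^2*‖b₂‖^2
      + (((A 1 0 : ℝ)*y + (A 1 1 : ℝ))^2*‖b₁‖^2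
        + 2*((A 1 0 : ℝ)*y + (A 1 1 : ℝ))*(A 1 0 : ℝ)*(m*‖b₁‖^2)
        + (A 1 0 : ℝ)^2*‖b₂‖^2) := by
    intro y
    have h0 := U_entries A y 0
    have h1 := U_entries A y 1
    simp only [lenAct, rowAct, h0.1, h0.2, h1.1, h1.2, norm_combo, hinner]
    push_cast
    ring
  rw [key x, key x']
  rcases eq_or_lt_of_le hxx with h | h
  · subst h; exact le_refl _
  · have hx1 : (x':ℝ) + 1 ≤ (x:ℝ) := by exact_mod_cast Int.add_one_le_iff.mpr h
    have hX' : (0:ℝ) ≤ (x':ℝ) := by exact_mod_cast hx'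
    have ha0 : (0:ℝ) ≤ (A 0 0 : ℝ) := by exact_mod_cast ST2_nonneg k 0 0
    have ha1 : (0:ℝ) ≤ (A 0 1 : ℝ) := by exact_mod_cast ST2_nonneg k 0 1
    have ha2 : (0:ℝ) ≤ (A 1 0 : ℝ) := by exact_mod_cast ST2_nonneg k 1 0
    have ha3 : (0:ℝ) ≤ (A 1 1 : ℝ) := by exact_mod_cast ST2_nonneg k 1 1
    have hm2 : 0 ≤ m + 1/2 := by linarith [hproper.1]
    have hd : (0:ℝ) ≤ (x:ℝ) - (x':ℝ) := by linarith
    have hs : (0:ℝ) ≤ (x:ℝ) + (x':ℝ) - 1 := by linarith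
    have t0 : (0:ℝ) ≤ (A 0 0 : ℝ)*((x:ℝ)-(x':ℝ))*((A 0 0 : ℝ)*((x:ℝ)+(x':ℝ)-1) + 2*(A 0 1 : ℝ)) := by
      apply mul_nonneg (mul_nonneg ha0 hd); nlinarith
    have t1 : (0:ℝ) ≤ (A 1 0 : ℝ)*((x:ℝ)-(x':ℝ))*((A 1 0 : ℝ)*((x:ℝ)+(x':ℝ)-1) + 2*(A 1 1 : ℝ)) := by
      apply mul_nonneg (mul_nonneg ha2 hd); nlinarith
    have s0 : (0:ℝ) ≤ (A 0 0 : ℝ)^2*((x:ℝ)-(x':ℝ))*(m+1/2) :=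
      mul_nonneg (mul_nonneg (sq_nonneg _) hd) hm2
    have s1 : (0:ℝ) ≤ (A 1 0 : ℝ)^2*((x:ℝ)-(x':ℝ))*(m+1/2) :=
      mul_nonneg (mul_nonneg (sq_nonneg _) hd) hm2
    nlinarith [mul_nonneg hB.le t0, mul_nonneg hB.le t1, mul_nonneg hB.le s0, mul_nonneg hB.le s1]
end

section
/- Every element of GL(2,ℤ) can be written as a product T^{x_{k+1}}·S·T^{x_k}·S·…·S·T^{x_1} for some k ≥ 0 and integers x_1,…,x_{k+1}; i.e. the matrices S = [[0,1],[1,0]] and T = [[1,0],[1,1]] generate GL(2,ℤ). -/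
open Matrix

def Sgl : (Matrix (Fin 2) (Fin 2) ℤ)ˣ :=
  ⟨!![0, 1; 1, 0], !![0, 1; 1, 0], by decide, by decide⟩

def Tgl : (Matrix (Fin 2) (Fin 2) ℤ)ˣ :=
  ⟨!![1, 0; 1, 1], !![1, 0; -1, 1], by decide, by decide⟩

private lemma Tval (x : ℤ) :
    ((Tgl ^ x : (Matrix (Fin 2) (Fin 2) ℤ)ˣ) : Matrix (Fin 2) (Fin 2) ℤ) = !![1, 0; x, 1] := by
  induction x using Int.induction_on with
  | zero => simp [Matrix.one_fin_two]
  | succ n ih =>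
      rw [_root_.zpow_add_one, Units.val_mul, ih]
      show _ * (Tgl : Matrix (Fin 2) (Fin 2) ℤ) = _
      simp [Tgl, Matrix.mul_fin_two]
  | pred n ih =>
      rw [_root_.zpow_sub_one, Units.val_mul, ih]
      have h : ((Tgl⁻¹ : (Matrix (Fin 2) (Fin 2) ℤ)ˣ) : Matrix (Fin 2) (Fin 2) ℤ) = !![1,0;-1,1] := rfl
      rw [h]
      simp [Matrix.mul_fin_two]
      ring_nf

private lemma Sinv : Sgl⁻¹ = Sgl := by
  apply Units.ext
  rfl

-- J = !![0,-1;1,0] is in any subgroup containing Sgl and Tgl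
private def Jgl : (Matrix (Fin 2) (Fin 2) ℤ)ˣ :=
  ⟨!![0, -1; 1, 0], !![0, 1; -1, 0], by decide, by decide⟩

private lemma Jword : Jgl = Tgl * Sgl * Tgl⁻¹ * Sgl * Tgl := by
  apply Units.ext
  decide

private lemma mem_closure_all :
    ∀ U : (Matrix (Fin 2) (Fin 2) ℤ)ˣ, U ∈ Subgroup.closure {Sgl, Tgl} := by
  set H := Subgroup.closure {Sgl, Tgl} with hH
  have hS : Sgl ∈ H := Subgroup.subset_closure (Or.inl rfl)
  have hT : Tgl ∈ H := Subgroup.subset_closure (Or.inr rfl)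
  have hJ : Jgl ∈ H := by
    rw [Jword]
    exact mul_mem (mul_mem (mul_mem (mul_mem hT hS) (inv_mem hT)) hS) hT
  have key : ∀ n : ℕ, ∀ U : (Matrix (Fin 2) (Fin 2) ℤ)ˣ,
      ((U : Matrix (Fin 2) (Fin 2) ℤ) 1 0).natAbs = n → U ∈ H := by
    intro n
    induction n using Nat.strong_induction_on with
    | _ n ih =>
      intro U hn
      set M : Matrix (Fin 2) (Fin 2) ℤ := (U : Matrix (Fin 2) (Fin 2) ℤ) with hM
      by_cases hc : M 1 0 = 0
      · -- base case: lower-left entry is 0, so M = !![a, b; 0, d] with a, d units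
        have hdet : IsUnit M.det := (Matrix.isUnit_iff_isUnit_det M).mp U.isUnit
        rw [Matrix.det_fin_two, hc, mul_zero, sub_zero] at hdet
        have ha : M 0 0 = 1 ∨ M 0 0 = -1 := Int.isUnit_iff.mp (isUnit_of_mul_isUnit_left hdet)
        have hd : M 1 1 = 1 ∨ M 1 1 = -1 := by
          rw [mul_comm] at hdet
          exact Int.isUnit_iff.mp (isUnit_of_mul_isUnit_left hdet)
        -- U = (S * T^(b*d) * S) * D  where D = diag(a, d)
        set b : ℤ := M 0 1 with hb
        have hw : ∀ D : (Matrix (Fin 2) (Fin 2) ℤ)ˣ,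
            (D : Matrix (Fin 2) (Fin 2) ℤ) = !![M 0 0, 0; 0, M 1 1] → D ∈ H → U ∈ H := by
          intro D hDval hD
          have hU : U = Sgl * Tgl ^ (b * M 1 1) * Sgl * D := by
            apply Units.ext
            rw [Units.val_mul, Units.val_mul, Units.val_mul, Tval, hDval]
            show M = _
            rcases hd with hd1 | hd1 <;>
            · ext i j
              fin_cases i <;> fin_cases j <;>
                simp [Sgl, Matrix.mul_apply, Fin.sum_univ_two, hd1, hc, ← hb]
          rw [hU]
          exact mul_mem (mul_mem (mul_mem hS (Subgroup.zpow_mem H hT _)) hS) hD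
        rcases ha with ha1 | ha1 <;> rcases hd with hd1 | hd1
        · exact hw 1 (by rw [ha1, hd1]; simp [Matrix.one_fin_two]) (one_mem H)
        · exact hw (Sgl * Jgl) (by rw [ha1, hd1]; decide) (mul_mem hS hJ)
        · exact hw (Jgl * Sgl) (by rw [ha1, hd1]; decide) (mul_mem hJ hS)
        · exact hw (Jgl * Jgl) (by rw [ha1, hd1]; decide) (mul_mem hJ hJ)
      · -- inductive step: Euclidean reduction
        set q : ℤ := M 0 0 / M 1 0 with hq
        set U' : (Matrix (Fin 2) (Fin 2) ℤ)ˣ := Tgl ^ (-q) * Sgl * U with hU'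
        have hentry : ((U' : Matrix (Fin 2) (Fin 2) ℤ)) 1 0 = M 0 0 % M 1 0 := by
          rw [hU', Units.val_mul, Units.val_mul, Tval]
          have hSv : (Sgl : Matrix (Fin 2) (Fin 2) ℤ) = !![0, 1; 1, 0] := rfl
          rw [hSv]
          simp [Matrix.mul_apply, Fin.sum_univ_two, hq]
          rw [Int.emod_def]
          ring
        have hlt : ((U' : Matrix (Fin 2) (Fin 2) ℤ) 1 0).natAbs < n := by
          rw [hentry, ← hn]
          have h1 : 0 ≤ M 0 0 % M 1 0 := Int.emod_nonneg _ hc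
          have h2 : M 0 0 % M 1 0 < |M 1 0| := by rw [Int.abs_eq_natAbs]; exact Int.emod_lt _ hc
          rw [Int.abs_eq_natAbs] at h2
          omega
        have hU'mem : U' ∈ H := ih _ hlt U' rfl
        have hfin : U = Sgl⁻¹ * ((Tgl ^ (-q))⁻¹ * U') := by
          rw [hU', mul_assoc, inv_mul_cancel_left, inv_mul_cancel_left]
        rw [hfin]
        exact mul_mem (inv_mem hS) (mul_mem (inv_mem (Subgroup.zpow_mem H hT _)) hU'mem)
  intro U
  exact key _ U rfl

private abbrev G2 := (Matrix (Fin 2) (Fin 2) ℤ)ˣ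

private lemma prod_congr_aux (k : ℕ) (x y : ℕ → ℤ) (h : ∀ j, j ≤ k → x j = y j) :
    (List.ofFn fun i : Fin k => Sgl * Tgl ^ x (k - (i : ℕ))).prod
      = (List.ofFn fun i : Fin k => Sgl * Tgl ^ y (k - (i : ℕ))).prod := by
  have h' : (fun i : Fin k => Sgl * Tgl ^ x (k - (i : ℕ)))
      = fun i : Fin k => Sgl * Tgl ^ y (k - (i : ℕ)) := by
    funext i
    rw [h _ (Nat.sub_le _ _)]
  rw [h']

private lemma nf_of_list : ∀ l : List G2,
    (∀ g ∈ l, g ∈ ({Sgl, Tgl} ∪ ({Sgl, Tgl} : Set G2)⁻¹ : Set G2)) →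
    ∃ (k : ℕ) (x : ℕ → ℤ),
      l.prod = Tgl ^ x (k + 1) * (List.ofFn fun i : Fin k => Sgl * Tgl ^ x (k - (i : ℕ))).prod := by
  intro l
  induction l with
  | nil =>
      intro _
      exact ⟨0, fun _ => 0, by simp⟩
  | cons g l ih =>
      intro hmem
      obtain ⟨k, x, hx⟩ := ih (fun g hg => hmem g (List.mem_cons_of_mem _ hg))
      have hS_case : ∃ (k' : ℕ) (x' : ℕ → ℤ),
          Sgl * l.prod = Tgl ^ x' (k' + 1) *
            (List.ofFn fun i : Fin k' => Sgl * Tgl ^ x' (k' - (i : ℕ))).prod := by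
        refine ⟨k + 1, fun i => if i = k + 2 then 0 else x i, ?_⟩
        set y : ℕ → ℤ := (fun i => if i = k + 2 then 0 else x i) with hy
        have hyle : ∀ j, j ≤ k + 1 → y j = x j := fun j hj => if_neg (by omega)
        have hy2 : y (k + 1 + 1) = 0 := if_pos rfl
        rw [hx, hy2, zpow_zero, one_mul, List.ofFn_succ, List.prod_cons]
        have h1 : (List.ofFn fun i : Fin k =>
              Sgl * Tgl ^ y (k + 1 - ((Fin.succ i : Fin (k + 1)) : ℕ)))
            = List.ofFn fun i : Fin k => Sgl * Tgl ^ x (k - (i : ℕ)) := by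
          have h1' : (fun i : Fin k =>
                Sgl * Tgl ^ y (k + 1 - ((Fin.succ i : Fin (k + 1)) : ℕ)))
              = fun i : Fin k => Sgl * Tgl ^ x (k - (i : ℕ)) := by
            funext i
            have h2 : k + 1 - ((Fin.succ i : Fin (k + 1)) : ℕ) = k - (i : ℕ) := by
              simp [Fin.val_succ]
            rw [h2, hyle _ (by omega)]
          rw [h1']
        rw [h1]
        have h4 : k + 1 - ((0 : Fin (k + 1)) : ℕ) = k + 1 := by simp
        rw [h4, hyle _ (le_refl _), mul_assoc]
      have hT_case : ∀ e : ℤ, ∃ (k' : ℕ) (x' : ℕ → ℤ),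
          Tgl ^ e * l.prod = Tgl ^ x' (k' + 1) *
            (List.ofFn fun i : Fin k' => Sgl * Tgl ^ x' (k' - (i : ℕ))).prod := by
        intro e
        refine ⟨k, Function.update x (k + 1) (x (k + 1) + e), ?_⟩
        rw [hx, Function.update_self,
          prod_congr_aux k (Function.update x (k + 1) (x (k + 1) + e)) x
            (fun j hj => Function.update_of_ne (by omega) _ _),
          ← mul_assoc, ← _root_.zpow_add, add_comm (x (k + 1)) e]
      have hg := hmem g List.mem_cons_self
      rw [Set.mem_union, Set.mem_inv, Set.mem_insert_iff, Set.mem_singleton_iff,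
        Set.mem_insert_iff, Set.mem_singleton_iff] at hg
      rcases hg with (hg | hg) | (hg | hg)
      · rw [List.prod_cons, hg]
        exact hS_case
      · rw [List.prod_cons, hg,
          show Tgl * l.prod = Tgl ^ (1 : ℤ) * l.prod by rw [zpow_one]]
        exact hT_case 1
      · have hg' : g = Sgl := by rw [← inv_inv g, hg, Sinv]
        rw [List.prod_cons, hg']
        exact hS_case
      · have hg' : g = Tgl⁻¹ := by rw [← inv_inv g, hg]
        rw [List.prod_cons, hg',
          show Tgl⁻¹ * l.prod = Tgl ^ (-1 : ℤ) * l.prod by rw [_root_.zpow_neg_one]]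
        exact hT_case (-1)

/-- `S` and `T` generate `GL(2, ℤ)`: every unimodular matrix is a product
`T^{x_{k+1}} · S·T^{x_k} · ⋯ · S·T^{x_1}`. -/
theorem stmt_19 :
    (Subgroup.closure {Sgl, Tgl} = (⊤ : Subgroup (Matrix (Fin 2) (Fin 2) ℤ)ˣ)) ∧
    ∀ U : (Matrix (Fin 2) (Fin 2) ℤ)ˣ, ∃ (k : ℕ) (x : ℕ → ℤ),
      U = Tgl ^ x (k + 1) * (List.ofFn fun i : Fin k => Sgl * Tgl ^ x (k - (i : ℕ))).prod := by
  constructor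
  · exact (Subgroup.eq_top_iff' _).mpr mem_closure_all
  · intro U
    have h1 : U ∈ Subgroup.closure {Sgl, Tgl} := mem_closure_all U
    have h2 : U ∈ Submonoid.closure ({Sgl, Tgl} ∪ ({Sgl, Tgl} : Set G2)⁻¹ : Set G2) := by
      rw [← Subgroup.closure_toSubmonoid]
      exact h1
    obtain ⟨l, hl, hprod⟩ := Submonoid.exists_list_of_mem_closure h2
    obtain ⟨k, x, hnf⟩ := nf_of_list l hl
    exact ⟨k, x, by rw [← hprod, hnf]⟩
end
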